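/- Let (Ω, 𝓕, μ) be a probability space, let M : Ω → Matrix (Fin n) (Fin i) ℝ be measurable, and let F = { ω : rank M(ω) < n }. Then there exists a measurable λ : Ω → ℝ^n such that for μ-a.e. ω ∈ F one has λ(ω) ≠ 0 and λ(ω) ⬝ M(ω) = 0. -/

import Mathlib

open MeasureTheory
open Matrix

section Aux

lemma det_add_outer_eq_zero' {n : ℕ} (G : Matrix (Fin n) (Fin n) ℝ) (v : Fin n → ℝ)
    (hdet : G.det = 0) (hadj : adjugate G = 0) :
    (G + Matrix.of fun i j => v i * v j).det = 0 := by
  classical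
  set f : (Fin n → ℝ) [⋀^Fin n]→ₗ[ℝ] ℝ := Matrix.detRowAlternating with hf
  set h : Fin n → Fin n → ℝ := fun i => v i • v with hh
  set G' : Fin n → Fin n → ℝ := fun i j => G i j with hG'
  have e := (f : MultilinearMap ℝ (fun _ : Fin n => Fin n → ℝ) ℝ).map_add_univ h G'
  have hdet1 : (G + Matrix.of fun i j => v i * v j).det = f (h + G') := by
    have hmat : (G + Matrix.of fun i j => v i * v j)
        = (show Matrix (Fin n) (Fin n) ℝ from h + G') := by
      ext i j
      simp only [Matrix.add_apply, Matrix.of_apply, hh, hG', Pi.add_apply, Pi.smul_apply,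
        smul_eq_mul]
      ring
    rw [hmat]
    rfl
  have e' : f (h + G') = ∑ s : Finset (Fin n), f (s.piecewise h G') := e
  rw [hdet1, e']
  apply Finset.sum_eq_zero
  intro s _
  by_cases hs0 : s = ∅
  · subst hs0
    rw [Finset.piecewise_empty]; exact hdet
  · by_cases hs1 : s.card = 1
    · obtain ⟨i, rfl⟩ := Finset.card_eq_one.mp hs1
      have hu : ({i} : Finset (Fin n)).piecewise h G' = Function.update G' i (v i • v) := by
        rw [Finset.piecewise_singleton]
      rw [hu, f.map_update_smul]
      have : f (Function.update G' i v) = 0 := by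
        have h2 : f (Function.update G' i v) = (G.updateRow i v).det := rfl
        rw [h2, ← Matrix.cramer_transpose_apply, Matrix.cramer_eq_adjugate_mulVec,
          ← Matrix.adjugate_transpose, hadj]
        simp
      rw [this, smul_zero]
    · have hlt : 1 < s.card := by
        rcases Finset.nonempty_iff_ne_empty.mpr hs0 with ⟨x, hx⟩
        have := Finset.card_pos.mpr ⟨x, hx⟩
        omega
      obtain ⟨i, hi, j, hj, hij⟩ := Finset.one_lt_card.mp hlt
      set u := s.piecewise h G' with hu
      have hui : u i = v i • v := Finset.piecewise_eq_of_mem _ _ _ hi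
      have h1 : u = Function.update u i (v i • v) := by rw [← hui, Function.update_eq_self]
      rw [h1, f.map_update_smul]
      have huj : Function.update u i v j = v j • v := by
        rw [Function.update_of_ne (Ne.symm hij)]
        exact Finset.piecewise_eq_of_mem _ _ _ hj
      have h2 : Function.update u i v
          = Function.update (Function.update u i v) j (v j • v) := by
        rw [← huj, Function.update_eq_self]
      rw [h2, f.map_update_smul]
      have h3 : f (Function.update (Function.update u i v) j v) = 0 := by
        apply f.map_eq_zero_of_eq _ _ hij
        rw [Function.update_of_ne hij, Function.update_self, Function.update_self]
      rw [h3, smul_zero, smul_zero]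

lemma vecMul_gram_eq_zero' {n m : ℕ} (M : Matrix (Fin n) (Fin m) ℝ) (w : Fin n → ℝ)
    (h : w ᵥ* (M * Mᵀ) = 0) : w ᵥ* M = 0 := by
  have h0 : (w ᵥ* (M * Mᵀ)) ⬝ᵥ w = 0 := by rw [h]; exact zero_dotProduct _
  rw [← vecMul_vecMul, vecMul_transpose, dotProduct_comm, dotProduct_mulVec] at h0
  exact dotProduct_self_eq_zero.mp h0

lemma quad_split' {n m : ℕ} (M : Matrix (Fin n) (Fin m) ℝ) (R : Finset (Fin n)) (w : Fin n → ℝ) :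
    (w ᵥ* (M * Mᵀ + diagonal fun i => if i ∈ R then (1:ℝ) else 0)) ⬝ᵥ w
      = (w ᵥ* M) ⬝ᵥ (w ᵥ* M) + ∑ i ∈ R, w i * w i := by
  rw [vecMul_add, add_dotProduct]
  congr 1
  · rw [← vecMul_vecMul, vecMul_transpose, dotProduct_comm, dotProduct_mulVec]
  · have : ∀ j, (w ᵥ* diagonal fun i => if i ∈ R then (1:ℝ) else 0) j
        = if j ∈ R then w j else 0 := by
      intro j
      rw [vecMul_diagonal]
      by_cases hj : j ∈ R <;> simp [hj]
    simp only [dotProduct, this, ite_mul, zero_mul]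
    rw [Finset.sum_ite_mem, Finset.univ_inter]

lemma key_lemma' {n m : ℕ} (M : Matrix (Fin n) (Fin m) ℝ) (hrank : M.rank < n) :
    ∃ (R : Finset (Fin n)) (p : Fin n),
      (adjugate (M * Mᵀ + diagonal fun i => if i ∈ R then (1:ℝ) else 0)) p ≠ 0 ∧
      ((adjugate (M * Mᵀ + diagonal fun i => if i ∈ R then (1:ℝ) else 0)) p) ᵥ* M = 0 := by
  classical
  have hdet0 : (M * Mᵀ).det = 0 := by
    by_contra hd
    have : (M * Mᵀ).rank = n := by
      rw [Matrix.rank_of_isUnit _ ((Matrix.isUnit_iff_isUnit_det _).mpr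
        (isUnit_iff_ne_zero.mpr hd)), Fintype.card_fin]
    rw [Matrix.rank_self_mul_transpose] at this
    omega
  obtain ⟨v0, hv00, hv0K⟩ := Matrix.exists_vecMul_eq_zero_iff.mpr hdet0
  have hv0M : v0 ᵥ* M = 0 := vecMul_gram_eq_zero' M v0 hv0K
  set P : Finset (Fin n) → Prop := fun R => ∃ v, v ≠ 0 ∧ v ᵥ* M = 0 ∧ ∀ i ∈ R, v i = 0 with hP
  have hPe : P ∅ := ⟨v0, hv00, hv0M, by simp⟩
  obtain ⟨R, hRmem, hRmax⟩ := Finset.exists_max_image (Finset.univ.filter P) Finset.card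
    ⟨∅, Finset.mem_filter.mpr ⟨Finset.mem_univ _, hPe⟩⟩
  obtain ⟨v, hv0, hvM, hvR⟩ := (Finset.mem_filter.mp hRmem).2
  have claim : ∀ w, w ᵥ* M = 0 → (∀ i ∈ R, w i = 0) → ∃ c : ℝ, w = c • v := by
    intro w hwM hwR
    obtain ⟨i, hvi⟩ : ∃ i, v i ≠ 0 := Function.ne_iff.mp hv0
    have hiR : i ∉ R := fun h => hvi (hvR i h)
    by_cases h0 : w - (w i / v i) • v = 0
    · exact ⟨w i / v i, by rwa [sub_eq_zero] at h0⟩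
    · exfalso
      have hPi : P (insert i R) := by
        refine ⟨w - (w i / v i) • v, h0, ?_, ?_⟩
        · rw [sub_vecMul, smul_vecMul, hwM, hvM, smul_zero, sub_zero]
        · intro j hj
          rcases Finset.mem_insert.mp hj with rfl | hjR
          · simp [div_mul_cancel₀ (w j) hvi]
          · simp [hwR j hjR, hvR j hjR]
      have hle := hRmax (insert i R) (Finset.mem_filter.mpr ⟨Finset.mem_univ _, hPi⟩)
      rw [Finset.card_insert_of_notMem hiR] at hle
      omega
  set d : Fin n → ℝ := fun i => if i ∈ R then (1:ℝ) else 0 with hd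
  set G : Matrix (Fin n) (Fin n) ℝ := M * Mᵀ + diagonal d with hG
  have hsplit : ∀ w : Fin n → ℝ, (w ᵥ* G) ⬝ᵥ w = 0 → w ᵥ* M = 0 ∧ ∀ i ∈ R, w i = 0 := by
    intro w hw
    rw [hG, quad_split' M R w] at hw
    have h1 : (0:ℝ) ≤ (w ᵥ* M) ⬝ᵥ (w ᵥ* M) := Finset.sum_nonneg fun j _ => mul_self_nonneg _
    have h2 : (0:ℝ) ≤ ∑ i ∈ R, w i * w i := Finset.sum_nonneg fun i _ => mul_self_nonneg _
    have e1 : (w ᵥ* M) ⬝ᵥ (w ᵥ* M) = 0 := by linarith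
    have e2 : ∑ i ∈ R, w i * w i = 0 := by linarith
    refine ⟨dotProduct_self_eq_zero.mp e1, fun i hi => ?_⟩
    exact mul_self_eq_zero.mp
      ((Finset.sum_eq_zero_iff_of_nonneg fun i _ => mul_self_nonneg (w i)).mp e2 i hi)
  have hvG : v ᵥ* G = 0 := by
    rw [hG, vecMul_add, ← vecMul_vecMul, hvM, zero_vecMul]
    ext j
    rw [Pi.add_apply, vecMul_diagonal]
    by_cases hj : j ∈ R
    · simp [hvR j hj]
    · simp [hd, hj]
  have hdetG : G.det = 0 := Matrix.exists_vecMul_eq_zero_iff.mp ⟨v, hv0, hvG⟩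
  have hadjG : adjugate G ≠ 0 := by
    intro hadj
    have hBdet := det_add_outer_eq_zero' G v hdetG hadj
    obtain ⟨w, hw0, hwB⟩ := Matrix.exists_vecMul_eq_zero_iff.mpr hBdet
    have hq : (w ᵥ* (G + Matrix.of fun i j => v i * v j)) ⬝ᵥ w = 0 := by
      rw [hwB]; exact zero_dotProduct _
    have hO : (w ᵥ* Matrix.of fun i j => v i * v j) = (w ⬝ᵥ v) • v := by
      ext j
      simp only [Matrix.vecMul, Matrix.of_apply, dotProduct, Pi.smul_apply, smul_eq_mul]
      rw [Finset.sum_mul]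
      exact Finset.sum_congr rfl fun i _ => (mul_assoc _ _ _).symm
    rw [vecMul_add, add_dotProduct, hO, smul_dotProduct, dotProduct_comm v w,
      smul_eq_mul] at hq
    rw [quad_split' M R w] at hq
    have h1 : (0:ℝ) ≤ (w ᵥ* M) ⬝ᵥ (w ᵥ* M) := Finset.sum_nonneg fun j _ => mul_self_nonneg _
    have h2 : (0:ℝ) ≤ ∑ i ∈ R, w i * w i := Finset.sum_nonneg fun i _ => mul_self_nonneg _
    have h3 : (0:ℝ) ≤ (w ⬝ᵥ v) * (w ⬝ᵥ v) := mul_self_nonneg _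
    have e1 : (w ᵥ* M) ⬝ᵥ (w ᵥ* M) = 0 := by linarith
    have e2 : ∑ i ∈ R, w i * w i = 0 := by linarith
    have e3 : w ⬝ᵥ v = 0 := mul_self_eq_zero.mp (by linarith)
    obtain ⟨c, rfl⟩ := claim w (dotProduct_self_eq_zero.mp e1)
      (fun i hi => mul_self_eq_zero.mp
        ((Finset.sum_eq_zero_iff_of_nonneg fun i _ => mul_self_nonneg (w i)).mp e2 i hi))
    rw [smul_dotProduct, smul_eq_mul, mul_eq_zero] at e3
    rcases e3 with rfl | hvv
    · exact hw0 (zero_smul _ _)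
    · exact hv0 (dotProduct_self_eq_zero.mp hvv)
  obtain ⟨p, hp⟩ : ∃ p, adjugate G p ≠ 0 := by
    by_contra hc
    push_neg at hc
    exact hadjG (funext hc)
  have hpG : (adjugate G p) ᵥ* G = 0 := by
    have hrow : (adjugate G p) ᵥ* G = (adjugate G * G) p := by
      ext j
      simp [Matrix.mul_apply, Matrix.vecMul, dotProduct]
    rw [hrow, Matrix.adjugate_mul, hdetG, zero_smul]
    rfl
  have := hsplit (adjugate G p) (by rw [hpG]; exact zero_dotProduct _)
  exact ⟨R, p, hp, this.1⟩

variable {Ω : Type*} [MeasurableSpace Ω]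

lemma measurable_det' {N : ℕ} {A : Ω → Matrix (Fin N) (Fin N) ℝ}
    (hA : ∀ i j, Measurable fun ω => A ω i j) :
    Measurable fun ω => (A ω).det := by
  have : (fun ω => (A ω).det)
      = fun ω => ∑ σ : Equiv.Perm (Fin N),
          ((Equiv.Perm.sign σ : ℤ) : ℝ) * ∏ i, A ω (σ i) i := by
    ext ω
    rw [Matrix.det_apply]
    exact Finset.sum_congr rfl fun σ _ => by rw [Units.smul_def, zsmul_eq_mul]
  rw [this]
  exact Finset.measurable_sum _ fun σ _ =>
    (Finset.measurable_prod _ fun i _ => hA (σ i) i).const_mul _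

lemma measurable_adjugate_entry' {N : ℕ} {A : Ω → Matrix (Fin N) (Fin N) ℝ}
    (hA : ∀ i j, Measurable fun ω => A ω i j) (p q : Fin N) :
    Measurable fun ω => adjugate (A ω) p q := by
  simp_rw [Matrix.adjugate_apply]
  apply measurable_det'
  intro i j
  have : (fun ω => (A ω).updateRow q (Pi.single p 1) i j)
      = fun ω => if i = q then (Pi.single p (1:ℝ) : Fin N → ℝ) j else A ω i j := by
    ext ω
    rw [Matrix.updateRow_apply]
  rw [this]
  split_ifs
  · exact measurable_const
  · exact hA i j

lemma select_aux' {ι : Type*} {n : ℕ}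
    (c : ι → Ω → (Fin n → ℝ)) (A : ι → Set Ω)
    (hc : ∀ k, Measurable (c k)) (hA : ∀ k, MeasurableSet (A k)) (ks : List ι) :
    ∃ l : Ω → Fin n → ℝ, Measurable l ∧
      ∀ ω, (∃ k ∈ ks, ω ∈ A k) → ∃ k, ω ∈ A k ∧ l ω = c k ω := by
  classical
  induction ks with
  | nil =>
    refine ⟨fun _ => 0, measurable_const, ?_⟩
    rintro ω ⟨k, hk, _⟩
    simp at hk
  | cons k t ih =>
    obtain ⟨l, hl, hprop⟩ := ih
    refine ⟨(A k).piecewise (c k) l, Measurable.piecewise (hA k) (hc k) hl, ?_⟩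
    rintro ω ⟨k', hk', hω⟩
    by_cases h : ω ∈ A k
    · exact ⟨k, h, Set.piecewise_eq_of_mem _ _ _ h⟩
    · have hk't : k' ∈ t := by
        rcases List.mem_cons.mp hk' with rfl | h'
        · exact absurd hω h
        · exact h'
      obtain ⟨k'', h1, h2⟩ := hprop ω ⟨k', hk't, hω⟩
      exact ⟨k'', h1, by rw [Set.piecewise_eq_of_notMem _ _ _ h]; exact h2⟩

end Aux

/-- Measurable selection of a nonvanishing left-kernel vector on the set where a
measurable matrix field has rank less than `n`. -/
theorem stmt_5 {Ω : Type*} [MeasurableSpace Ω] (μ : Measure Ω) [IsProbabilityMeasure μ]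
    (n m : ℕ) (M : Ω → Matrix (Fin n) (Fin m) ℝ)
    (hM : ∀ i j, Measurable fun ω => M ω i j)
    (F : Set Ω) (hF : F = {ω | (M ω).rank < n}) :
    ∃ l : Ω → (Fin n → ℝ), Measurable l ∧
      ∀ᵐ ω ∂μ, ω ∈ F → l ω ≠ 0 ∧ Matrix.vecMul (l ω) (M ω) = 0 := by
  classical
  set Gf : Finset (Fin n) → Ω → Matrix (Fin n) (Fin n) ℝ :=
    fun R ω => M ω * (M ω)ᵀ + diagonal fun i => if i ∈ R then (1:ℝ) else 0 with hGf
  have hGmeas : ∀ R i j, Measurable fun ω => Gf R ω i j := by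
    intro R i j
    have : (fun ω => Gf R ω i j)
        = fun ω => (∑ k, M ω i k * M ω j k)
            + (diagonal fun i => if i ∈ R then (1:ℝ) else 0) i j := by
      ext ω
      simp [hGf, Matrix.mul_apply, Matrix.add_apply, Matrix.transpose_apply]
    rw [this]
    exact (Finset.measurable_sum _ fun k _ => (hM i k).mul (hM j k)).add measurable_const
  set c : (Finset (Fin n) × Fin n) → Ω → (Fin n → ℝ) :=
    fun k ω => adjugate (Gf k.1 ω) k.2 with hc
  have hcmeas : ∀ k, Measurable (c k) := fun k =>
    measurable_pi_lambda _ fun j => measurable_adjugate_entry' (hGmeas k.1) k.2 j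
  set A : (Finset (Fin n) × Fin n) → Set Ω :=
    fun k => {ω | c k ω ≠ 0 ∧ (c k ω) ᵥ* (M ω) = 0} with hA
  have hAmeas : ∀ k, MeasurableSet (A k) := by
    intro k
    have h1 : MeasurableSet {ω | c k ω ≠ 0} := by
      have he : {ω | c k ω ≠ 0} = (⋂ j, {ω | c k ω j = 0})ᶜ := by
        ext ω
        simp [funext_iff]
      rw [he]
      exact (MeasurableSet.iInter fun j => measurableSet_eq_fun
        ((measurable_pi_apply j).comp (hcmeas k)) measurable_const).compl
    have h2 : MeasurableSet {ω | (c k ω) ᵥ* (M ω) = 0} := by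
      have he : {ω | (c k ω) ᵥ* (M ω) = 0}
          = ⋂ j, {ω | (∑ p, c k ω p * M ω p j) = 0} := by
        ext ω
        simp [funext_iff, Matrix.vecMul, dotProduct]
      rw [he]
      exact MeasurableSet.iInter fun j => measurableSet_eq_fun
        (Finset.measurable_sum _ fun p _ =>
          ((measurable_pi_apply p).comp (hcmeas k)).mul (hM p j)) measurable_const
    exact (Set.setOf_and ▸ h1.inter h2 : _)
  obtain ⟨l, hl, hsel⟩ := select_aux' c A hcmeas hAmeas (Finset.univ.toList)
  refine ⟨l, hl, Filter.Eventually.of_forall ?_⟩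
  intro ω hωF
  have hrank : (M ω).rank < n := by rw [hF] at hωF; exact hωF
  obtain ⟨R, p, hp1, hp2⟩ := key_lemma' (M ω) hrank
  have hmem : ω ∈ A (R, p) := ⟨hp1, hp2⟩
  obtain ⟨k, hk, hlk⟩ := hsel ω ⟨(R, p), Finset.mem_toList.mpr (Finset.mem_univ _), hmem⟩
  rw [hlk]
  exact ⟨hk.1, hk.2⟩
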